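/- Let n ≥ 1 and K ≥ 1. If z ∈ ℝⁿ is a non-zero vector of height h(z) := √(‖z‖₁‖z‖_∞)/‖z‖ ≤ K, then there exists a non-zero binary vector ξ ∈ {0,1}ⁿ with |⟨z,ξ⟩|/(‖z‖‖ξ‖) ≥ 1/(2√(log(2K²) + 1)). -/

import Mathlib

open scoped BigOperators

/-- Euclidean norm of a real vector. -/
noncomputable def enR {n : ℕ} (v : Fin n → ℝ) : ℝ :=
  Real.sqrt (∑ i, v i ^ 2)

/-- Logarithmic diameter of a real vector. -/
noncomputable def logDiamR {n : ℕ} (z : Fin n → ℝ) : ℝ :=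
  (⨆ i, |z i|) / sInf {r | ∃ i, z i ≠ 0 ∧ r = |z i|}

/-- The height of a real vector: √(‖z‖₁‖z‖_∞)/‖z‖. -/
noncomputable def heightR {n : ℕ} (z : Fin n → ℝ) : ℝ :=
  Real.sqrt ((∑ i, |z i|) * ⨆ i, |z i|) / enR z

open Finset

lemma abelBound (v : ℕ → ℝ) (J : ℕ) (hJ : 1 ≤ J) (c' M θ : ℝ) (hc' : 0 < c')
    (hθ : 0 < θ) (hθM : θ ≤ M)
    (hmono : ∀ j k, j ≤ k → k < J → v k ≤ v j)
    (hlo : ∀ j, j < J → θ < v j) (hhi : ∀ j, j < J → v j ≤ M)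
    (hs : ∀ j, 1 ≤ j → j ≤ J → ∑ k ∈ Finset.range j, v k ≤ c' * Real.sqrt j) :
    ∑ j ∈ Finset.range J, (v j)^2 ≤ c'^2 * (1 + Real.log (M / θ)) := by
  have hM : 0 < M := lt_of_lt_of_le hθ hθM
  have hJ1 : J - 1 < J := Nat.sub_lt hJ one_pos
  -- basic: √(j+1) * v j ≤ c' for j < J
  have hsv : ∀ j, j < J → Real.sqrt ((j:ℝ)+1) * v j ≤ c' := by
    intro j hj
    have hpos : (0:ℝ) < v j := hθ.trans (hlo j hj)
    have h1 : ((j:ℝ)+1) * v j ≤ ∑ k ∈ Finset.range (j+1), v k := by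
      have : ∑ k ∈ Finset.range (j+1), v j ≤ ∑ k ∈ Finset.range (j+1), v k := by
        apply Finset.sum_le_sum
        intro k hk
        exact hmono k j (Nat.lt_succ_iff.mp (Finset.mem_range.mp hk)) hj
      simpa [Finset.sum_const, Finset.card_range, mul_comm, add_mul] using this
    have h2 : ((j:ℝ)+1) * v j ≤ c' * Real.sqrt ((j:ℝ)+1) := by
      have := hs (j+1) (Nat.le_add_left 1 j) hj
      push_cast at this
      linarith [h1, this]
    have hsq : Real.sqrt ((j:ℝ)+1) * Real.sqrt ((j:ℝ)+1) = (j:ℝ)+1 :=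
      Real.mul_self_sqrt (by positivity)
    have hsqpos : (0:ℝ) < Real.sqrt ((j:ℝ)+1) := Real.sqrt_pos.mpr (by positivity)
    nlinarith [h2, hsq, hsqpos]
  -- Abel identity
  have habel := Finset.sum_range_by_parts v v J
  simp only [smul_eq_mul] at habel
  have hid : ∑ j ∈ Finset.range J, v j * v j =
      v (J-1) * ∑ j ∈ Finset.range J, v j
      + ∑ j ∈ Finset.range (J-1), (v j - v (j+1)) * ∑ k ∈ Finset.range (j+1), v k := by
    rw [habel, sub_eq_add_neg, ← Finset.sum_neg_distrib]
    congr 1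
    apply Finset.sum_congr rfl
    intro j _; ring
  -- bound the last term
  have hcast : ((J-1:ℕ):ℝ) + 1 = (J:ℝ) := by
    have := Nat.sub_add_cancel hJ
    exact_mod_cast congrArg (Nat.cast (R := ℝ)) this
  have hlast : v (J-1) * ∑ j ∈ Finset.range J, v j ≤ c'^2 := by
    have hpos : (0:ℝ) < v (J-1) := hθ.trans (hlo _ hJ1)
    have h2 : ∑ k ∈ Finset.range J, v k ≤ c' * Real.sqrt J := hs J hJ le_rfl
    have h3 : Real.sqrt (J:ℝ) * v (J-1) ≤ c' := by
      have := hsv (J-1) hJ1; rwa [hcast] at this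
    have hsq : (0:ℝ) ≤ Real.sqrt (J:ℝ) := Real.sqrt_nonneg _
    nlinarith [h2, h3, hpos]
  -- bound middle terms by telescoping logs
  have hmid : ∑ j ∈ Finset.range (J-1), (v j - v (j+1)) * ∑ k ∈ Finset.range (j+1), v k
      ≤ c'^2 * (Real.log (v 0) - Real.log (v (J-1))) := by
    have : ∑ j ∈ Finset.range (J-1), (v j - v (j+1)) * ∑ k ∈ Finset.range (j+1), v k
        ≤ ∑ j ∈ Finset.range (J-1), c'^2 * (Real.log (v j) - Real.log (v (j+1))) := by
      apply Finset.sum_le_sum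
      intro j hj
      have hjJ : j + 1 < J := by
        have := Finset.mem_range.mp hj
        omega
      have hjJ' : j < J := Nat.lt_of_succ_lt hjJ
      have hvj : (0:ℝ) < v j := hθ.trans (hlo j hjJ')
      have hvj1 : (0:ℝ) < v (j+1) := hθ.trans (hlo _ hjJ)
      have hdrop : v (j+1) ≤ v j := hmono j (j+1) (Nat.le_succ j) hjJ
      have hsle : ∑ k ∈ Finset.range (j+1), v k ≤ c' * Real.sqrt ((j:ℝ)+1) := by
        have := hs (j+1) (Nat.le_add_left 1 j) hjJ.le
        push_cast at this; exact this
      have hsqle : Real.sqrt ((j:ℝ)+1) ≤ c' / v j := by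
        rw [le_div_iff₀ hvj]; exact hsv j hjJ'
      have hlog : 1 - v (j+1) / v j ≤ Real.log (v j) - Real.log (v (j+1)) := by
        have h := Real.log_le_sub_one_of_pos (x := v (j+1) / v j) (by positivity)
        rw [Real.log_div (ne_of_gt hvj1) (ne_of_gt hvj)] at h
        linarith
      have hsum_pos : (0:ℝ) ≤ ∑ k ∈ Finset.range (j+1), v k := by
        apply Finset.sum_nonneg
        intro k hk
        exact le_of_lt (hθ.trans (hlo k (lt_of_lt_of_le (Finset.mem_range.mp hk) (le_of_lt hjJ))))
      calc (v j - v (j+1)) * ∑ k ∈ Finset.range (j+1), v k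
          ≤ (v j - v (j+1)) * (c' * Real.sqrt ((j:ℝ)+1)) := by
            apply mul_le_mul_of_nonneg_left hsle (by linarith)
        _ ≤ (v j - v (j+1)) * (c' * (c' / v j)) := by
            apply mul_le_mul_of_nonneg_left _ (by linarith)
            exact mul_le_mul_of_nonneg_left hsqle (le_of_lt hc')
        _ = c'^2 * (1 - v (j+1) / v j) := by field_simp
        _ ≤ c'^2 * (Real.log (v j) - Real.log (v (j+1))) := by
            apply mul_le_mul_of_nonneg_left hlog (by positivity)
    rw [← Finset.mul_sum, Finset.sum_range_sub' (fun j => Real.log (v j)) (J-1)] at this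
    exact this
  -- final assembly
  have hlogle : Real.log (v 0) - Real.log (v (J-1)) ≤ Real.log (M / θ) := by
    have hv0 : (0:ℝ) < v 0 := hθ.trans (hlo 0 hJ)
    have hvJ : θ < v (J-1) := hlo _ hJ1
    have h1 : Real.log (v 0) ≤ Real.log M := Real.log_le_log hv0 (hhi 0 hJ)
    have h2 : Real.log θ ≤ Real.log (v (J-1)) := Real.log_le_log hθ hvJ.le
    rw [Real.log_div (ne_of_gt hM) (ne_of_gt hθ)]
    linarith
  have hfin : ∑ j ∈ Finset.range J, v j * v j ≤ c'^2 * (1 + Real.log (M / θ)) := by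
    rw [hid]
    have : c'^2 * (Real.log (v 0) - Real.log (v (J-1))) ≤ c'^2 * Real.log (M / θ) :=
      mul_le_mul_of_nonneg_left hlogle (by positivity)
    nlinarith [hlast, hmid, this]
  calc ∑ j ∈ Finset.range J, (v j)^2 = ∑ j ∈ Finset.range J, v j * v j := by
        apply Finset.sum_congr rfl; intro j _; ring
    _ ≤ c'^2 * (1 + Real.log (M / θ)) := hfin

lemma headBound {n : ℕ} (w : Fin n → ℝ) (c' M θ : ℝ) (hc' : 0 < c') (hθ : 0 < θ)
    (hθM : θ ≤ M) (hwM : ∀ i, w i ≤ M)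
    (hkey : ∀ T : Finset (Fin n), T.Nonempty → |∑ i ∈ T, w i| ≤ c' * Real.sqrt T.card) :
    ∑ i ∈ Finset.univ.filter (fun i => θ < w i), (w i)^2 ≤ c'^2 * (1 + Real.log (M / θ)) := by
  classical
  set S := Finset.univ.filter (fun i => θ < w i) with hSdef
  have hlogpos : 0 ≤ Real.log (M / θ) :=
    Real.log_nonneg (by rw [le_div_iff₀ hθ]; simpa using hθM)
  rcases S.eq_empty_or_nonempty with hemp | hne
  · rw [hemp]
    simp only [Finset.sum_empty]
    nlinarith [sq_nonneg c']
  obtain ⟨i₀, hi₀⟩ := hne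
  set le : Fin n → Fin n → Bool := fun a b => decide (w b ≤ w a) with hle
  set L := S.toList.mergeSort le with hLdef
  have hperm : L.Perm S.toList := List.mergeSort_perm _ _
  have hsorted : L.Pairwise (fun a b => le a b = true) := by
    apply List.pairwise_mergeSort
    · intro a b c hab hbc
      simp only [hle, decide_eq_true_iff] at *
      exact le_trans hbc hab
    · intro a b
      simp only [hle, Bool.or_eq_true, decide_eq_true_iff]
      exact le_total (w b) (w a)
  have hsorted' : L.Pairwise (fun a b => w b ≤ w a) := by
    refine hsorted.imp ?_
    intro a b h
    simpa [hle, decide_eq_true_iff] using h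
  have hnodup : L.Nodup := hperm.nodup_iff.mpr S.nodup_toList
  set J := L.length with hJdef
  have hJcard : J = S.card := by rw [hJdef, hperm.length_eq, Finset.length_toList]
  have hJ1 : 1 ≤ J := by rw [hJcard]; exact Finset.card_pos.mpr ⟨i₀, hi₀⟩
  set ι : ℕ → Fin n := fun k => L.getD k i₀ with hιdef
  have hget : ∀ k (hk : k < J), ι k = L.get ⟨k, hk⟩ := fun k hk => List.getD_eq_get _ _ ⟨k, hk⟩
  have hmem : ∀ k, k < J → ι k ∈ S := by
    intro k hk
    rw [hget k hk]
    have h1 : L.get ⟨k, hk⟩ ∈ L := List.get_mem _ _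
    exact Finset.mem_toList.mp (hperm.mem_iff.mp h1)
  have hmono : ∀ j k, j ≤ k → k < J → w (ι k) ≤ w (ι j) := by
    intro j k hjk hk
    rcases eq_or_lt_of_le hjk with rfl | hlt
    · exact le_rfl
    · have hj : j < J := lt_trans hlt hk
      rw [hget j hj, hget k hk]
      exact List.pairwise_iff_get.mp hsorted' ⟨j, hj⟩ ⟨k, hk⟩ hlt
  have hlo' : ∀ j, j < J → θ < w (ι j) := by
    intro j hj
    have := hmem j hj
    rw [hSdef] at this
    exact (Finset.mem_filter.mp this).2
  have hhi' : ∀ j, j < J → w (ι j) ≤ M := fun j _ => hwM _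
  have hpref : ∀ (f : Fin n → ℝ) (j : ℕ), j ≤ J →
      ∑ i ∈ (L.take j).toFinset, f i = ∑ k ∈ Finset.range j, f (ι k) := by
    intro f j
    induction j with
    | zero => intro _; simp
    | succ j ih =>
      intro hj
      have hjJ : j < J := hj
      have htake : L.take (j+1) = L.take j ++ [L.get ⟨j, hjJ⟩] := by
        rw [List.take_succ]
        congr 1
        simp [List.getElem?_eq_getElem hjJ]
      have hnd : (L.take j ++ [L.get ⟨j, hjJ⟩]).Nodup := by
        rw [← htake]
        exact hnodup.sublist (List.take_sublist _ _)
      have hnotin : L.get ⟨j, hjJ⟩ ∉ (L.take j).toFinset := by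
        rw [List.mem_toFinset]
        simp only [List.nodup_append, List.nodup_cons, List.disjoint_singleton] at hnd
        tauto
      rw [htake, List.toFinset_append]
      have : ([L.get ⟨j, hjJ⟩] : List (Fin n)).toFinset = {L.get ⟨j, hjJ⟩} := by simp
      rw [this, Finset.sum_union (Finset.disjoint_singleton_right.mpr hnotin),
        Finset.sum_singleton, Finset.sum_range_succ, ih (le_of_lt hjJ), hget j hjJ]
  have hcard : ∀ j, j ≤ J → (L.take j).toFinset.card = j := by
    intro j hj
    rw [List.toFinset_card_of_nodup (hnodup.sublist (List.take_sublist _ _)), List.length_take]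
    omega
  have hs : ∀ j, 1 ≤ j → j ≤ J → ∑ k ∈ Finset.range j, w (ι k) ≤ c' * Real.sqrt j := by
    intro j h1 hj
    have hT : ((L.take j).toFinset).Nonempty := Finset.card_pos.mp (by rw [hcard j hj]; omega)
    have h2 := hkey _ hT
    rw [hcard j hj] at h2
    have h3 := le_trans (le_abs_self _) h2
    rwa [hpref w j hj] at h3
  have hmain := abelBound (fun k => w (ι k)) J hJ1 c' M θ hc' hθ hθM hmono hlo' hhi' hs
  have hLS : L.toFinset = S := by
    ext a
    simp [List.mem_toFinset, hperm.mem_iff, Finset.mem_toList]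
  have htot : ∑ i ∈ S, (w i)^2 = ∑ k ∈ Finset.range J, (w (ι k))^2 := by
    have h := hpref (fun i => (w i)^2) J le_rfl
    rw [List.take_length, hLS] at h
    exact h
  rw [htot]
  exact hmain

set_option maxHeartbeats 1000000 in
theorem stmt6 {n : ℕ} (hn : 1 ≤ n) (K : ℝ) (hK : 1 ≤ K)
    (z : Fin n → ℝ) (hz : z ≠ 0) (hh : heightR z ≤ K) :
    ∃ ξ : Fin n → ℝ, (∀ i, ξ i = 0 ∨ ξ i = 1) ∧ ξ ≠ 0 ∧
      |∑ i, z i * ξ i| / (enR z * enR ξ) ≥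
        1 / (2 * Real.sqrt (Real.log (2 * K ^ 2) + 1)) := by
  classical
  by_contra hcon
  push_neg at hcon
  haveI : Nonempty (Fin n) := ⟨⟨0, hn⟩⟩
  obtain ⟨i₁, hi₁⟩ := Function.ne_iff.mp hz
  simp only [Pi.zero_apply] at hi₁
  set N2 : ℝ := ∑ i, z i ^ 2 with hN2def
  have hN2 : 0 < N2 := by
    have h1 : 0 < z i₁ ^ 2 := pow_two_pos_of_ne_zero hi₁
    have h2 : z i₁ ^ 2 ≤ N2 :=
      Finset.single_le_sum (f := fun i => z i ^ 2) (fun i _ => sq_nonneg _) (Finset.mem_univ i₁)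
    linarith
  have hsN2 : 0 < Real.sqrt N2 := Real.sqrt_pos.mpr hN2
  set M : ℝ := ⨆ i, |z i| with hMdef
  have hbdd : BddAbove (Set.range fun i => |z i|) := Set.Finite.bddAbove (Set.finite_range _)
  have hM_ge : ∀ i, |z i| ≤ M := fun i => le_ciSup hbdd i
  have hM : 0 < M := lt_of_lt_of_le (abs_pos.mpr hi₁) (hM_ge i₁)
  set L1 : ℝ := ∑ i, |z i| with hL1def
  have hL1 : 0 ≤ L1 := Finset.sum_nonneg fun i _ => abs_nonneg _
  -- height unfolding
  have hL1M : L1 * M ≤ K ^ 2 * N2 := by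
    have h0 : Real.sqrt (L1 * M) ≤ K * Real.sqrt N2 := by
      have := hh
      rw [heightR, div_le_iff₀ (by rw [enR]; exact hsN2)] at this
      rw [enR] at this
      exact this
    have h1 : (0:ℝ) ≤ L1 * M := by positivity
    calc L1 * M = Real.sqrt (L1 * M) ^ 2 := (Real.sq_sqrt h1).symm
      _ ≤ (K * Real.sqrt N2) ^ 2 := by
          apply pow_le_pow_left₀ (Real.sqrt_nonneg _) h0
      _ = K ^ 2 * N2 := by rw [mul_pow, Real.sq_sqrt hN2.le]
  set t : ℝ := Real.log (2 * K ^ 2) with htdef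
  have hlog2pos : (0:ℝ) < Real.log 2 := Real.log_pos (by norm_num)
  have ht : Real.log 2 ≤ t := Real.log_le_log (by norm_num) (by nlinarith)
  have ht1 : (0:ℝ) < t + 1 := by linarith
  set c : ℝ := 1 / (2 * Real.sqrt (t + 1)) with hcdef
  have hc : 0 < c := by
    have := Real.sqrt_pos.mpr ht1
    positivity
  set c' : ℝ := c * Real.sqrt N2 with hc'def
  have hc' : 0 < c' := mul_pos hc hsN2
  -- the key consequence of the negated statement
  have hkey : ∀ T : Finset (Fin n), T.Nonempty →
      |∑ i ∈ T, z i| ≤ c' * Real.sqrt T.card := by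
    intro T hT
    set ξ : Fin n → ℝ := fun i => if i ∈ T then 1 else 0 with hξdef
    have hbin : ∀ i, ξ i = 0 ∨ ξ i = 1 := by
      intro i
      by_cases h : i ∈ T <;> simp [hξdef, h]
    have hξne : ξ ≠ 0 := by
      obtain ⟨i, hi⟩ := hT
      intro h
      have := congrFun h i
      simp [hξdef, hi] at this
    have hlt := hcon ξ hbin hξne
    have hcard : (0:ℝ) < Real.sqrt T.card := by
      have : 0 < T.card := Finset.card_pos.mpr hT
      have : (0:ℝ) < (T.card : ℝ) := by exact_mod_cast this
      exact Real.sqrt_pos.mpr this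
    have henξ : enR ξ = Real.sqrt T.card := by
      rw [enR]
      congr 1
      have : ∀ i, ξ i ^ 2 = if i ∈ T then (1:ℝ) else 0 := by
        intro i; by_cases h : i ∈ T <;> simp [hξdef, h]
      rw [Finset.sum_congr rfl (fun i _ => this i), Finset.sum_ite_mem,
        Finset.univ_inter, Finset.sum_const, nsmul_eq_mul, mul_one]
    have hsum : ∑ i, z i * ξ i = ∑ i ∈ T, z i := by
      have : ∀ i, z i * ξ i = if i ∈ T then z i else 0 := by
        intro i; by_cases h : i ∈ T <;> simp [hξdef, h]
      rw [Finset.sum_congr rfl (fun i _ => this i), Finset.sum_ite_mem, Finset.univ_inter]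
    rw [henξ, hsum] at hlt
    have henz : enR z = Real.sqrt N2 := rfl
    rw [henz, div_lt_iff₀ (by positivity)] at hlt
    calc |∑ i ∈ T, z i| ≤ 1 / (2 * Real.sqrt (Real.log (2 * K ^ 2) + 1)) *
          (Real.sqrt N2 * Real.sqrt T.card) := le_of_lt hlt
      _ = c' * Real.sqrt T.card := by rw [hc'def, hcdef, htdef]; ring
  -- apply headBound to z and -z with threshold θ
  set θ : ℝ := M / (4 * K ^ 2) with hθdef
  have hθ : 0 < θ := by positivity
  have hθM : θ ≤ M := by
    rw [hθdef]
    apply div_le_self hM.le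
    nlinarith
  have hplus := headBound z c' M θ hc' hθ hθM
    (fun i => (le_abs_self _).trans (hM_ge i)) hkey
  have hkeyneg : ∀ T : Finset (Fin n), T.Nonempty →
      |∑ i ∈ T, (-z) i| ≤ c' * Real.sqrt T.card := by
    intro T hT
    have : ∑ i ∈ T, (-z) i = -∑ i ∈ T, z i := by simp
    rw [this, abs_neg]
    exact hkey T hT
  have hminus := headBound (-z) c' M θ hc' hθ hθM
    (fun i => (neg_le_abs _).trans (hM_ge i)) hkeyneg
  simp only [Pi.neg_apply, neg_sq] at hminus
  -- partition of N2
  have hsplit1 : N2 = ∑ i ∈ Finset.univ.filter (fun i => θ < |z i|), z i ^ 2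
      + ∑ i ∈ Finset.univ.filter (fun i => ¬ θ < |z i|), z i ^ 2 :=
    (Finset.sum_filter_add_sum_filter_not _ _ _).symm
  have e1 : (Finset.univ.filter (fun i => θ < |z i|)).filter (fun i => 0 < z i)
      = Finset.univ.filter (fun i => θ < z i) := by
    ext i
    simp only [Finset.mem_filter, Finset.mem_univ, true_and]
    constructor
    · rintro ⟨h1, h2⟩
      rwa [abs_of_pos h2] at h1
    · intro h
      have h2 : 0 < z i := lt_trans hθ h
      exact ⟨by rwa [abs_of_pos h2], h2⟩
  have e2 : (Finset.univ.filter (fun i => θ < |z i|)).filter (fun i => ¬ 0 < z i)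
      = Finset.univ.filter (fun i => θ < -z i) := by
    ext i
    simp only [Finset.mem_filter, Finset.mem_univ, true_and, not_lt]
    constructor
    · rintro ⟨h1, h2⟩
      rwa [abs_of_nonpos h2] at h1
    · intro h
      have h2 : z i ≤ 0 := by linarith
      exact ⟨by rwa [abs_of_nonpos h2], h2⟩
  have hsplit2 : ∑ i ∈ Finset.univ.filter (fun i => θ < |z i|), z i ^ 2
      = ∑ i ∈ Finset.univ.filter (fun i => θ < z i), z i ^ 2
      + ∑ i ∈ Finset.univ.filter (fun i => θ < -z i), z i ^ 2 := by
    rw [← e1, ← e2]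
    exact (Finset.sum_filter_add_sum_filter_not _ _ _).symm
  -- tail bound
  have htail : ∑ i ∈ Finset.univ.filter (fun i => ¬ θ < |z i|), z i ^ 2 ≤ θ * L1 := by
    calc ∑ i ∈ Finset.univ.filter (fun i => ¬ θ < |z i|), z i ^ 2
        ≤ ∑ i ∈ Finset.univ.filter (fun i => ¬ θ < |z i|), θ * |z i| := by
          apply Finset.sum_le_sum
          intro i hi
          have h1 : |z i| ≤ θ := le_of_not_gt (Finset.mem_filter.mp hi).2
          have h2 : 0 ≤ |z i| := abs_nonneg _
          nlinarith [sq_abs (z i)]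
      _ = θ * ∑ i ∈ Finset.univ.filter (fun i => ¬ θ < |z i|), |z i| := by
          rw [Finset.mul_sum]
      _ ≤ θ * L1 := by
          apply mul_le_mul_of_nonneg_left _ hθ.le
          apply Finset.sum_le_sum_of_subset_of_nonneg (Finset.filter_subset _ _)
          intro i _ _
          exact abs_nonneg _
  have htail2 : θ * L1 ≤ N2 / 4 := by
    have h4K : (0:ℝ) < 4 * K ^ 2 := by positivity
    have hθval : θ * (4 * K ^ 2) = M := by rw [hθdef]; field_simp
    have hX : θ * L1 * (4 * K ^ 2) ≤ K ^ 2 * N2 := by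
      calc θ * L1 * (4 * K ^ 2) = L1 * (θ * (4 * K ^ 2)) := by ring
        _ = L1 * M := by rw [hθval]
        _ ≤ K ^ 2 * N2 := hL1M
    nlinarith [hX, h4K]
  -- c'^2 value and log value
  have hc2 : c' ^ 2 = N2 / (4 * (t + 1)) := by
    rw [hc'def, mul_pow, Real.sq_sqrt hN2.le, hcdef]
    rw [div_pow, mul_pow, Real.sq_sqrt ht1.le]
    ring
  have hlogMθ : Real.log (M / θ) = Real.log 2 + t := by
    have hMθ : M / θ = 4 * K ^ 2 := by
      rw [hθdef]
      field_simp
    rw [hMθ, htdef]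
    have : (4:ℝ) * K ^ 2 = 2 * (2 * K ^ 2) := by ring
    rw [this, Real.log_mul (by norm_num) (by positivity)]
  -- combine
  have hbig : N2 ≤ 2 * (c' ^ 2 * (1 + Real.log (M / θ))) + N2 / 4 := by
    linarith [hsplit1, hsplit2, hplus, hminus, htail, htail2]
  rw [hc2, hlogMθ] at hbig
  obtain ⟨D, hD⟩ : ∃ D, D = N2 / (4 * (t + 1)) := ⟨_, rfl⟩
  rw [← hD] at hbig
  have hDN2 : D * (4 * (t + 1)) = N2 := by
    rw [hD]
    exact div_mul_cancel₀ N2 (by positivity)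
  have hDpos : 0 < D := by rw [hD]; positivity
  have hlog2lt : Real.log 2 < 1 := by linarith [Real.log_two_lt_d9]
  nlinarith [hbig, hDN2, hDpos, ht, hlog2lt,
    mul_nonneg hDpos.le (sub_nonneg.mpr ht),
    mul_pos hDpos (show (0:ℝ) < 1 - Real.log 2 by linarith)]
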